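/- arXiv:1403.4407 — 2 statements merged into one kernel-verified Lean document; each statement's English description precedes it below -/
import Mathlib

section
/- Let T be a consistent first-order theory extending PA with a unary predicate K such that (T) T proves K(⌜A⌝) → A for every sentence A, and (Nec) whenever T ⊢ A then T ⊢ K(⌜A⌝). Then T is inconsistent. -/
/-- Formulas of an abstract language with an operator `K` ("knowledge predicate"). -/
inductive Fm : Type
  | atom : ℕ → Fm
  | bot : Fm
  | imp : Fm → Fm → Fm
  | K : Fm → Fm

namespace Fm

def neg (A : Fm) : Fm := imp A bot
def conj (A B : Fm) : Fm := neg (imp A (neg B))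
def iff' (A B : Fm) : Fm := conj (imp A B) (imp B A)

end Fm

open Fm

/-- The Knower Paradox (Montague): a theory closed under propositional consequence,
with a knowledge operator `K` satisfying the veracity scheme `K A → A` and the
necessitation rule, together with a diagonal sentence `D ↔ ¬K D` (as supplied by
the Fixed Point Lemma in any theory extending PA), is inconsistent. -/
theorem knower_paradox
    (Prov : Fm → Prop)
    (ax1 : ∀ A B, Prov (imp A (imp B A)))
    (ax2 : ∀ A B C, Prov (imp (imp A (imp B C)) (imp (imp A B) (imp A C))))
    (ax3 : ∀ A B, Prov (imp (imp (neg A) (neg B)) (imp B A)))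
    (mp : ∀ A B, Prov (imp A B) → Prov A → Prov B)
    (hT : ∀ A, Prov (imp (K A) A))
    (hNec : ∀ A, Prov A → Prov (K A))
    (D : Fm) (hdiag : Prov (iff' D (neg (K D)))) :
    Prov bot := by
  have id' : ∀ A, Prov (imp A A) := fun A =>
    mp _ _ (mp _ _ (ax2 A (imp A A) A) (ax1 A (imp A A))) (ax1 A A)
  have hs : ∀ A B C, Prov (imp A B) → Prov (imp B C) → Prov (imp A C) :=
    fun A B C h1 h2 => mp _ _ (mp _ _ (ax2 A B C) (mp _ _ (ax1 (imp B C) A) h2)) h1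
  have swap : ∀ A B C, Prov (imp A (imp B C)) → Prov (imp B (imp A C)) :=
    fun A B C h => hs B (imp A B) (imp A C) (ax1 B A) (mp _ _ (ax2 A B C) h)
  have Tc : ∀ A B, Prov (imp A (imp (imp A B) B)) :=
    fun A B => swap (imp A B) A B (id' (imp A B))
  have efq : ∀ B, Prov (imp bot B) :=
    fun B => mp _ _ (ax3 B bot) (mp _ _ (ax1 (neg bot) (neg B)) (id' bot))
  have dni : ∀ A, Prov (imp A (neg (neg A))) := fun A => Tc A bot
  have dne : ∀ A, Prov (imp (neg (neg A)) A) :=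
    fun A => mp _ _ (ax3 A (neg (neg A))) (dni (neg A))
  have contra : ∀ A B, Prov (imp A B) → Prov (imp (neg B) (neg A)) :=
    fun A B h => swap A (neg B) bot (hs A B (imp (neg B) bot) h (Tc B bot))
  have andr : ∀ P Q, Prov (conj P Q) → Prov Q := fun P Q h =>
    mp _ _ (dne Q) (mp _ _ (contra (neg Q) (imp P (neg Q)) (ax1 (neg Q) P)) h)
  have andl : ∀ P Q, Prov (conj P Q) → Prov P := fun P Q h =>
    have e1 : Prov (imp P (imp bot (neg Q))) :=
      mp _ _ (ax1 (imp bot (neg Q)) P) (efq (neg Q))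
    have e2 : Prov (imp (neg P) (imp P (neg Q))) := mp _ _ (ax2 P bot (neg Q)) e1
    mp _ _ (dne P) (mp _ _ (contra (neg P) (imp P (neg Q)) e2) h)
  have h1 : Prov (imp D (neg (K D))) := andl _ _ hdiag
  have h2 : Prov (imp (neg (K D)) D) := andr _ _ hdiag
  have hc : Prov (imp (K D) (imp (K D) bot)) := hs _ _ _ (hT D) h1
  have hnk : Prov (neg (K D)) :=
    mp _ _ (mp _ _ (ax2 (K D) (K D) bot) hc) (id' (K D))
  have hD : Prov D := mp _ _ h2 hnk
  exact mp _ _ hnk (hNec D hD)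
end

section
/- Let T be a theory extending PA with a unary predicate K satisfying (T) K(⌜A⌝) → A for all sentences A and (Nec) T ⊢ A implies T ⊢ K(⌜A⌝). Let E be any sentence and let D be a sentence with T ⊢ D ↔ (K(⌜¬D⌝) ∨ (E ∧ ¬K(⌜D → E⌝))) (given by the Fixed Point Lemma). Then T is inconsistent. -/
namespace Fm

def disj (A B : Fm) : Fm := imp (neg A) B
end Fm

open Fm

namespace ExaminerAux

open Fm

/-- Derivability from hypotheses `Γ` and extra axioms `ax` in a Hilbert system. -/
inductive Ded (ax : Fm → Prop) : List Fm → Fm → Prop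
  | hyp {Γ A} : A ∈ Γ → Ded ax Γ A
  | axm {Γ A} : ax A → Ded ax Γ A
  | a1 {Γ} (A B : Fm) : Ded ax Γ (imp A (imp B A))
  | a2 {Γ} (A B C : Fm) :
      Ded ax Γ (imp (imp A (imp B C)) (imp (imp A B) (imp A C)))
  | a3 {Γ} (A B : Fm) : Ded ax Γ (imp (imp (neg A) (neg B)) (imp B A))
  | mp {Γ A B} : Ded ax Γ (imp A B) → Ded ax Γ A → Ded ax Γ B

namespace Ded

variable {ax : Fm → Prop} {Γ Γ' : List Fm} {A B C : Fm}

theorem weaken (h : Ded ax Γ A) (hs : ∀ x ∈ Γ, x ∈ Γ') : Ded ax Γ' A := by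
  induction h with
  | hyp h => exact .hyp (hs _ h)
  | axm h => exact .axm h
  | a1 A B => exact .a1 A B
  | a2 A B C => exact .a2 A B C
  | a3 A B => exact .a3 A B
  | mp _ _ ih1 ih2 => exact .mp ih1 ih2

theorem idd : Ded ax Γ (imp A A) :=
  .mp (.mp (.a2 A (imp A A) A) (.a1 A (imp A A))) (.a1 A A)

/-- Deduction theorem. -/
theorem deduction (h : Ded ax (B :: Γ) A) : Ded ax Γ (imp B A) := by
  induction h with
  | hyp h =>
    rcases List.mem_cons.1 h with h | h
    · subst h; exact idd
    · exact .mp (.a1 _ _) (.hyp h)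
  | axm h => exact .mp (.a1 _ _) (.axm h)
  | a1 A B => exact .mp (.a1 _ _) (.a1 A B)
  | a2 A B C => exact .mp (.a1 _ _) (.a2 A B C)
  | a3 A B => exact .mp (.a1 _ _) (.a3 A B)
  | mp _ _ ih1 ih2 => exact .mp (.mp (.a2 _ _ _) ih1) ih2

theorem undeduction (h : Ded ax Γ (imp B A)) : Ded ax (B :: Γ) A :=
  .mp (h.weaken (fun _ hx => List.mem_cons_of_mem _ hx)) (.hyp (List.mem_cons_self))

theorem efq : Ded ax Γ (imp bot A) :=
  .mp (.a3 A bot) (.mp (.a1 (neg bot) (neg A)) idd)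

theorem comp (h1 : Ded ax Γ (imp A B)) (h2 : Ded ax Γ (imp B C)) :
    Ded ax Γ (imp A C) := by
  apply deduction
  exact .mp (h2.weaken (fun _ hx => List.mem_cons_of_mem _ hx))
    (.mp (h1.weaken (fun _ hx => List.mem_cons_of_mem _ hx)) (.hyp (List.mem_cons_self)))

theorem dne : Ded ax Γ (imp (neg (neg A)) A) := by
  apply deduction
  have hA : Ded ax (neg (neg A) :: Γ) (imp (neg A) (neg (imp A A))) :=
    comp (.hyp (List.mem_cons_self)) efq
  exact .mp (.mp (.a3 A (imp A A)) hA) idd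

theorem conjElim1 : Ded ax Γ (imp (conj A B) A) := by
  apply deduction
  apply Ded.mp dne
  apply deduction
  have ha : Ded ax (A :: neg A :: conj A B :: Γ) A := .hyp (by simp)
  have hna : Ded ax (A :: neg A :: conj A B :: Γ) (neg A) := .hyp (by simp)
  have h2 : Ded ax (neg A :: conj A B :: Γ) (imp A (neg B)) :=
    deduction (efq.mp (hna.mp ha))
  have hc : Ded ax (neg A :: conj A B :: Γ) (conj A B) := .hyp (by simp)
  exact hc.mp h2

theorem conjElim2 : Ded ax Γ (imp (conj A B) B) := by
  apply deduction
  apply Ded.mp dne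
  apply deduction
  have h1 : Ded ax (neg B :: conj A B :: Γ) (imp A (neg B)) :=
    .mp (.a1 _ _) (.hyp (by simp))
  have hc : Ded ax (neg B :: conj A B :: Γ) (conj A B) := .hyp (by simp)
  exact hc.mp h1

theorem conjIntro : Ded ax Γ (imp A (imp B (conj A B))) := by
  apply deduction; apply deduction; apply deduction
  have himp : Ded ax (imp A (neg B) :: B :: A :: Γ) (imp A (neg B)) := .hyp (by simp)
  have ha : Ded ax (imp A (neg B) :: B :: A :: Γ) A := .hyp (by simp)
  have hb : Ded ax (imp A (neg B) :: B :: A :: Γ) B := .hyp (by simp)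
  exact (himp.mp ha).mp hb

/-- `A → (¬A → B)`, i.e. left disjunction introduction for `disj`. -/
theorem disjIntroL : Ded ax Γ (imp A (disj A B)) := by
  apply deduction; apply deduction
  have hna : Ded ax (neg A :: A :: Γ) (neg A) := .hyp (by simp)
  have ha : Ded ax (neg A :: A :: Γ) A := .hyp (by simp)
  exact efq.mp (hna.mp ha)

end Ded

theorem to_prov {Prov : Fm → Prop}
    (ax1 : ∀ A B, Prov (imp A (imp B A)))
    (ax2 : ∀ A B C, Prov (imp (imp A (imp B C)) (imp (imp A B) (imp A C))))
    (ax3 : ∀ A B, Prov (imp (imp (neg A) (neg B)) (imp B A)))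
    (mp : ∀ A B, Prov (imp A B) → Prov A → Prov B)
    {A : Fm} (h : Ded Prov [] A) : Prov A := by
  induction h with
  | hyp h => simp at h
  | axm h => exact h
  | a1 A B => exact ax1 A B
  | a2 A B C => exact ax2 A B C
  | a3 A B => exact ax3 A B
  | mp _ _ ih1 ih2 => exact mp _ _ ih1 ih2

end ExaminerAux


/-- The Examiner Paradox (self-referential one-day Surprise Test Paradox): a
theory closed under propositional consequence with a knowledge operator `K`
satisfying veracity `K A → A` and the necessitation rule, together with a
sentence `E` and a diagonal sentence
`D ↔ (K ¬D ∨ (E ∧ ¬K (D → E)))` (as supplied by the Fixed Point Lemma in any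
theory extending PA), is inconsistent. -/
theorem examiner_paradox
    (Prov : Fm → Prop)
    (ax1 : ∀ A B, Prov (imp A (imp B A)))
    (ax2 : ∀ A B C, Prov (imp (imp A (imp B C)) (imp (imp A B) (imp A C))))
    (ax3 : ∀ A B, Prov (imp (imp (neg A) (neg B)) (imp B A)))
    (mp : ∀ A B, Prov (imp A B) → Prov A → Prov B)
    (hT : ∀ A, Prov (imp (K A) A))
    (hNec : ∀ A, Prov A → Prov (K A))
    (E D : Fm)
    (hdiag : Prov (iff' D (disj (K (neg D)) (conj E (neg (K (imp D E))))))) :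
    Prov bot := by
  classical
  set P : Fm := K (neg D) with hP
  set R : Fm := imp D E with hR
  set Q : Fm := conj E (neg (K R)) with hQ
  have toP : ∀ {A : Fm}, ExaminerAux.Ded Prov [] A → Prov A :=
    fun h => ExaminerAux.to_prov ax1 ax2 ax3 mp h
  -- extract both directions of the diagonal equivalence
  have h1 : Prov (imp D (disj P Q)) :=
    toP (.mp ExaminerAux.Ded.conjElim1 (.axm hdiag))
  have h2 : Prov (imp (disj P Q) D) :=
    toP (.mp ExaminerAux.Ded.conjElim2 (.axm hdiag))
  -- P → D
  have hPD : Prov (imp P D) :=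
    toP (ExaminerAux.Ded.comp ExaminerAux.Ded.disjIntroL (.axm h2))
  -- ¬P is provable (since P → D and P → ¬D)
  have hnP : Prov (neg P) := by
    apply toP
    apply ExaminerAux.Ded.deduction
    have hD : ExaminerAux.Ded Prov [P] D :=
      .mp (.axm hPD) (.hyp (by simp))
    have hnD : ExaminerAux.Ded Prov [P] (neg D) :=
      .mp (.axm (hT (neg D))) (.hyp (by simp [hP]))
    exact hnD.mp hD
  -- D → Q
  have hDQ : Prov (imp D Q) := by
    apply toP
    apply ExaminerAux.Ded.deduction
    have hdisj : ExaminerAux.Ded Prov [D] (disj P Q) :=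
      .mp (.axm h1) (.hyp (by simp))
    exact hdisj.mp (.axm hnP)
  -- D → E, i.e. R is provable
  have hRprov : Prov R :=
    toP (ExaminerAux.Ded.comp (.axm hDQ) ExaminerAux.Ded.conjElim1)
  have hKR : Prov (K R) := hNec R hRprov
  -- D → ¬K R
  have hDnKR : Prov (imp D (neg (K R))) :=
    toP (ExaminerAux.Ded.comp (.axm hDQ) ExaminerAux.Ded.conjElim2)
  -- ¬D is provable
  have hnD : Prov (neg D) := by
    apply toP
    apply ExaminerAux.Ded.deduction
    have h : ExaminerAux.Ded Prov [D] (neg (K R)) :=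
      .mp (.axm hDnKR) (.hyp (by simp))
    exact h.mp (.axm hKR)
  -- necessitation gives P, hence D, hence ⊥
  have hPprov : Prov P := hNec (neg D) hnD
  exact mp D bot hnD (mp P D hPD hPprov)
end
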